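/- Fractional integration by parts (Lemma 4 of the paper, stated with explicit integrals): Let 0 < α < 1 and a < b be real numbers, let f : [a,b] → ℝ be continuously differentiable and g : [a,b] → ℝ be continuous. Define the Riemann–Liouville fractional integral G(t) = (1/Γ(1−α)) ∫ₐᵗ (t−s)^{−α} g(s) ds for t ∈ [a,b] (so G(a) = 0), and assume G is differentiable on (a,b) with derivative G' integrable over (a,b) (G' is the Riemann–Liouville derivative ₐD_t^α g). Then ∫ₐᵇ f(t)·G'(t) dt = f(b)·G(b) − ∫ₐᵇ g(t) · [ (1/Γ(1−α)) ∫ₜᵇ (τ−t)^{−α} f'(τ) dτ ] dt. In other words, the left Riemann–Liouville derivative acting on g is transferred onto f as (minus) the right-sided Caputo derivative ᵗᶜD_b^α f(t) = (−1/Γ(1−α)) ∫ₜᵇ (τ−t)^{−α} f'(τ) dτ, together with the boundary term [f(t)·ₐI_t^{1−α}g(t)] evaluated between a and b. -/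

import Mathlib

open Real intervalIntegral

open MeasureTheory Set in
private lemma ker_intInt {α : ℝ} (hα1 : α < 1) (a t : ℝ) :
    IntervalIntegrable (fun s => (t - s) ^ (-α)) volume a t := by
  have h := (intervalIntegral.intervalIntegrable_rpow' (a := t - a) (b := t - t)
      (by linarith : (-1:ℝ) < -α)).comp_sub_left t
  simpa using h

open MeasureTheory Set in
private lemma ker_integral {α : ℝ} (hα : 0 < α) (hα1 : α < 1) {a t : ℝ} (hat : a ≤ t) :
    ∫ s in a..t, (t - s) ^ (-α) = (t - a) ^ (1 - α) / (1 - α) := by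
  have h := intervalIntegral.integral_comp_sub_left (a := a) (b := t)
    (fun u : ℝ => u ^ (-α)) t
  simp only [sub_self] at h
  rw [h, integral_rpow (Or.inl (by linarith : (-1:ℝ) < -α)),
    Real.zero_rpow (by intro hc; linarith : -α + 1 ≠ 0)]
  rw [show -α + 1 = 1 - α by ring]
  ring

/-- Fractional integration by parts (Lemma 4): for `0 < α < 1`, `a < b`,
`f` continuously differentiable on `[a,b]`, `g` continuous on `[a,b]`, and
`G = ₐI_t^{1-α} g` the Riemann–Liouville fractional integral (so `G a = 0`),
assumed differentiable on `(a,b)` with integrable derivative `G'`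
(the Riemann–Liouville derivative `ₐD_t^α g`), one has
`∫ₐᵇ f · G' = f(b)·G(b) − ∫ₐᵇ g(t) · (1/Γ(1−α)) ∫ₜᵇ (τ−t)^{−α} f'(τ) dτ dt`. -/
theorem fractional_integration_by_parts
    (α a b : ℝ) (hα : 0 < α) (hα1 : α < 1) (hab : a < b)
    (f g G G' : ℝ → ℝ)
    (hf : ContDiffOn ℝ 1 f (Set.Icc a b))
    (hg : ContinuousOn g (Set.Icc a b))
    (hG : ∀ t ∈ Set.Icc a b,
      G t = (1 / Real.Gamma (1 - α)) * ∫ s in a..t, (t - s) ^ (-α) * g s)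
    (hG' : ∀ t ∈ Set.Ioo a b, HasDerivAt G (G' t) t)
    (hG'int : IntervalIntegrable G' MeasureTheory.volume a b) :
    ∫ t in a..b, f t * G' t =
      f b * G b -
        ∫ t in a..b,
          g t * ((1 / Real.Gamma (1 - α)) * ∫ τ in t..b, (τ - t) ^ (-α) * deriv f τ) := by
  classical
  set c := 1 / Real.Gamma (1 - α) with hc
  set φ := derivWithin f (Set.Icc a b) with hφdef
  have huIcc : Set.uIcc a b = Set.Icc a b := Set.uIcc_of_le hab.le
  have hunique : UniqueDiffOn ℝ (Set.Icc a b) := uniqueDiffOn_Icc hab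
  have hφcont : ContinuousOn φ (Set.Icc a b) := hf.continuousOn_derivWithin hunique le_rfl
  have hfc : ContinuousOn f (Set.Icc a b) := hf.continuousOn
  have hφeq : ∀ x ∈ Set.Ioo a b, φ x = deriv f x := fun x hx =>
    derivWithin_of_mem_nhds (Icc_mem_nhds hx.1 hx.2)
  have hfd : ∀ x ∈ Set.Ioo a b, HasDerivAt f (φ x) x := by
    intro x hx
    have hmem : Set.Icc a b ∈ nhds x := Icc_mem_nhds hx.1 hx.2
    have hd : DifferentiableAt ℝ f x :=
      ((hf.differentiableOn one_ne_zero) x (Set.mem_Icc_of_Ioo hx)).differentiableAt hmem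
    rw [hφeq x hx]
    exact hd.hasDerivAt
  -- continuous extensions of `g` and `φ`
  set proj : ℝ → ℝ := fun x => max a (min x b) with hproj
  have hprojmem : ∀ x, proj x ∈ Set.Icc a b := fun x =>
    ⟨le_max_left _ _, max_le hab.le (min_le_right x b)⟩
  have hprojid : ∀ x ∈ Set.Icc a b, proj x = x := by
    intro x hx
    simp [hproj, min_eq_left hx.2, max_eq_right hx.1]
  have hprojcont : Continuous proj := continuous_const.max (continuous_id.min continuous_const)
  set g1 : ℝ → ℝ := fun x => g (proj x) with hg1def
  set φ1 : ℝ → ℝ := fun x => φ (proj x) with hφ1def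
  have hg1cont : Continuous g1 := hg.comp_continuous hprojcont hprojmem
  have hφ1cont : Continuous φ1 := hφcont.comp_continuous hprojcont hprojmem
  have hg1eq : ∀ x ∈ Set.Icc a b, g1 x = g x := fun x hx => by
    rw [hg1def]; simp [hprojid x hx]
  have hφ1eq : ∀ x ∈ Set.Icc a b, φ1 x = φ x := fun x hx => by
    rw [hφ1def]; simp [hprojid x hx]
  obtain ⟨Mg, hMg⟩ : ∃ M, ∀ x, ‖g1 x‖ ≤ M := by
    obtain ⟨M, hM⟩ := isCompact_Icc.exists_bound_of_continuousOn hg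
    exact ⟨M, fun x => hM _ (hprojmem x)⟩
  obtain ⟨Mφ, hMφ⟩ : ∃ M, ∀ x, ‖φ1 x‖ ≤ M := by
    obtain ⟨M, hM⟩ := isCompact_Icc.exists_bound_of_continuousOn hφcont
    exact ⟨M, fun x => hM _ (hprojmem x)⟩
  have hMg0 : 0 ≤ Mg := le_trans (norm_nonneg _) (hMg a)
  have hMφ0 : 0 ≤ Mφ := le_trans (norm_nonneg _) (hMφ a)
  -- representation of G via the extended g1
  have hrepr : ∀ t ∈ Set.Icc a b,
      (∫ s in a..t, (t - s) ^ (-α) * g s) = ∫ u in (0:ℝ)..(t - a), u ^ (-α) * g1 (t - u) := by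
    intro t ht
    have h1 : (∫ s in a..t, (t - s) ^ (-α) * g s) = ∫ s in a..t, (t - s) ^ (-α) * g1 s := by
      apply intervalIntegral.integral_congr
      intro s hs
      rw [Set.uIcc_of_le ht.1] at hs
      simp [hg1eq s ⟨hs.1, le_trans hs.2 ht.2⟩]
    have key := intervalIntegral.integral_comp_sub_left (a := a) (b := t)
      (fun u : ℝ => u ^ (-α) * g1 (t - u)) t
    simp only [sub_sub_cancel, sub_self] at key
    rw [h1, ← key]
  have hGH : ∀ t ∈ Set.Icc a b,
      G t = c * ∫ u in (0:ℝ)..(t - a), u ^ (-α) * g1 (t - u) := by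
    intro t ht
    rw [hG t ht, hrepr t ht]
  -- continuity of G on [a, b]
  have hH : ContinuousOn (fun t => ∫ u in (0:ℝ)..(t - a), u ^ (-α) * g1 (t - u))
      (Set.Icc a b) := by
    intro t₀ ht₀
    set ν := MeasureTheory.volume.restrict (Set.Ioc (0:ℝ) (b - a)) with hν
    set F : ℝ → ℝ → ℝ :=
      fun t u => Set.indicator (Set.Ioc 0 (t - a)) (fun u => u ^ (-α) * g1 (t - u)) u with hF
    have hFeq : ∀ t ∈ Set.Icc a b,
        (∫ u in (0:ℝ)..(t - a), u ^ (-α) * g1 (t - u)) = ∫ u, F t u ∂ν := by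
      intro t ht
      simp only [hF, hν]
      rw [intervalIntegral.integral_of_le (by linarith [ht.1] : (0:ℝ) ≤ t - a),
        MeasureTheory.setIntegral_indicator measurableSet_Ioc, Set.Ioc_inter_Ioc, max_self,
        min_eq_right (by linarith [ht.2] : t - a ≤ b - a)]
    have hcw : ContinuousWithinAt (fun t => ∫ u, F t u ∂ν) (Set.Icc a b) t₀ := by
      apply MeasureTheory.continuousWithinAt_of_dominated (bound := fun u => Mg * u ^ (-α))
      · apply Filter.Eventually.of_forall
        intro t
        simp only [hF]
        apply Measurable.aestronglyMeasurable
        apply Measurable.indicator ?_ measurableSet_Ioc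
        have hker1 : Measurable fun u : ℝ => u ^ (-α) :=
          measurable_of_continuousOn_compl_singleton 0 (fun x hx =>
            (Real.continuousAt_rpow_const x (-α) (Or.inl hx)).continuousWithinAt)
        exact hker1.mul (hg1cont.measurable.comp (measurable_const.sub measurable_id))
      · apply Filter.Eventually.of_forall
        intro t
        refine (MeasureTheory.ae_restrict_iff' measurableSet_Ioc).2
          (Filter.Eventually.of_forall ?_)
        intro u hu
        simp only [hF]
        by_cases h : u ∈ Set.Ioc 0 (t - a)
        · rw [Set.indicator_of_mem h]
          have hu0 : (0:ℝ) ≤ u := hu.1.le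
          rw [Real.norm_eq_abs, abs_mul, abs_of_nonneg (Real.rpow_nonneg hu0 _)]
          calc u ^ (-α) * |g1 (t - u)| ≤ u ^ (-α) * Mg := by
                have := hMg (t - u)
                rw [Real.norm_eq_abs] at this
                exact mul_le_mul_of_nonneg_left this (Real.rpow_nonneg hu0 _)
            _ = Mg * u ^ (-α) := by ring
        · rw [Set.indicator_of_notMem h]
          simp only [norm_zero]
          have h1 : (0:ℝ) ≤ u ^ (-α) := Real.rpow_nonneg hu.1.le _
          nlinarith
      · exact ((intervalIntegral.intervalIntegrable_rpow'
          (by linarith : (-1:ℝ) < -α)).const_mul Mg).1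
      · have hnull : ν {t₀ - a} = 0 := by
          rw [hν, MeasureTheory.Measure.restrict_apply (measurableSet_singleton _)]
          exact MeasureTheory.measure_mono_null Set.inter_subset_left Real.volume_singleton
        have h1 : ∀ᵐ u ∂ν, u ≠ t₀ - a := by
          rw [MeasureTheory.ae_iff]
          simpa [not_not, Set.setOf_eq_eq_singleton] using hnull
        have h2 : ∀ᵐ u ∂ν, u ∈ Set.Ioc (0:ℝ) (b - a) :=
          MeasureTheory.ae_restrict_mem measurableSet_Ioc
        filter_upwards [h1, h2] with u hu1 hu2
        rcases lt_or_gt_of_ne hu1 with hlt | hgt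
        · have hev : ∀ᶠ t in nhds t₀, F t u = u ^ (-α) * g1 (t - u) := by
            have hopen : IsOpen {t : ℝ | u < t - a} :=
              isOpen_lt continuous_const (continuous_id.sub continuous_const)
            filter_upwards [hopen.mem_nhds (by exact hlt : t₀ ∈ {t : ℝ | u < t - a})] with t ht
            simp only [hF]
            rw [Set.indicator_of_mem (Set.mem_Ioc.mpr ⟨hu2.1, le_of_lt ht⟩)]
          have hcont : ContinuousAt (fun t => u ^ (-α) * g1 (t - u)) t₀ :=
            (continuous_const.mul
              (hg1cont.comp (continuous_id.sub continuous_const))).continuousAt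
          exact (hcont.congr (Filter.EventuallyEq.symm hev)).continuousWithinAt
        · have hev : ∀ᶠ t in nhds t₀, F t u = 0 := by
            have hopen : IsOpen {t : ℝ | t - a < u} :=
              isOpen_lt (continuous_id.sub continuous_const) continuous_const
            filter_upwards [hopen.mem_nhds (by exact hgt : t₀ ∈ {t : ℝ | t - a < u})] with t ht
            simp only [hF]
            rw [Set.indicator_of_notMem (fun hmem => absurd hmem.2 (not_le.2 ht))]
          exact (continuousAt_const.congr (Filter.EventuallyEq.symm hev)).continuousWithinAt
    exact hcw.congr (fun t ht => hFeq t ht) (hFeq t₀ ht₀)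
  have hGcont : ContinuousOn G (Set.Icc a b) :=
    (continuousOn_const.mul hH).congr (fun t ht => hGH t ht)
  have hGa : G a = 0 := by
    rw [hG a ⟨le_rfl, hab.le⟩]
    simp
  have hfc' : ContinuousOn f (Set.uIcc a b) := by rw [huIcc]; exact hfc
  have hGcont' : ContinuousOn G (Set.uIcc a b) := by rw [huIcc]; exact hGcont
  have hφcont' : ContinuousOn φ (Set.uIcc a b) := by rw [huIcc]; exact hφcont
  have hφint : IntervalIntegrable φ MeasureTheory.volume a b := hφcont'.intervalIntegrable
  -- integration by parts
  have hparts := intervalIntegral.integral_mul_deriv_eq_deriv_mul_of_hasDerivAt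
    (u := f) (v := G) (u' := φ) (v' := G') (a := a) (b := b)
    hfc' hGcont'
    (by rw [min_eq_left hab.le, max_eq_right hab.le]; exact hfd)
    (by rw [min_eq_left hab.le, max_eq_right hab.le]; exact hG')
    hφint hG'int
  rw [hGa, mul_zero, sub_zero] at hparts
  rw [hparts]
  congr 1
  -- replace `deriv f` by `φ` in the right-hand side
  have hR1 : (∫ t in a..b,
        g t * (c * ∫ τ in t..b, (τ - t) ^ (-α) * deriv f τ))
      = ∫ t in a..b, g t * (c * ∫ τ in t..b, (τ - t) ^ (-α) * φ τ) := by
    apply intervalIntegral.integral_congr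
    intro t ht
    rw [huIcc] at ht
    show g t * (c * ∫ τ in t..b, (τ - t) ^ (-α) * deriv f τ)
      = g t * (c * ∫ τ in t..b, (τ - t) ^ (-α) * φ τ)
    have hin : (∫ τ in t..b, (τ - t) ^ (-α) * deriv f τ)
        = ∫ τ in t..b, (τ - t) ^ (-α) * φ τ := by
      apply intervalIntegral.integral_congr_ae
      have hb : ∀ᵐ τ : ℝ, τ ≠ b := by
        rw [MeasureTheory.ae_iff]
        simpa [not_not, Set.setOf_eq_eq_singleton] using Real.volume_singleton (x := b)
      filter_upwards [hb] with τ hτ hmem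
      rw [Set.uIoc_of_le ht.2] at hmem
      have hτIoo : τ ∈ Set.Ioo a b :=
        ⟨lt_of_le_of_lt ht.1 hmem.1, lt_of_le_of_ne hmem.2 hτ⟩
      simp only [hφeq τ hτIoo]
    rw [hin]
  rw [hR1]
  -- set up the product integral
  set A := Set.Ioc a b with hA
  set ν := MeasureTheory.volume.restrict A with hν
  set Fk : ℝ → ℝ → ℝ :=
    fun t s => Set.indicator (Set.Ioc a t) (fun s => φ1 t * ((t - s) ^ (-α) * g1 s)) s with hFk
  haveI : MeasureTheory.IsFiniteMeasure ν := by
    constructor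
    rw [hν, MeasureTheory.Measure.restrict_apply_univ, hA, Real.volume_Ioc]
    exact ENNReal.ofReal_lt_top
  have hL : ∀ t ∈ A, φ t * G t = c * ∫ s, Fk t s ∂ν := by
    intro t ht
    have htIcc : t ∈ Set.Icc a b := ⟨ht.1.le, ht.2⟩
    rw [hG t htIcc]
    have h1 : (∫ s in a..t, (t - s) ^ (-α) * g s)
        = ∫ s in a..t, (t - s) ^ (-α) * g1 s := by
      apply intervalIntegral.integral_congr
      intro s hs
      rw [Set.uIcc_of_le ht.1.le] at hs
      simp [hg1eq s ⟨hs.1, le_trans hs.2 ht.2⟩]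
    have h2 : φ t * ∫ s in a..t, (t - s) ^ (-α) * g1 s
        = ∫ s in a..t, φ1 t * ((t - s) ^ (-α) * g1 s) := by
      rw [intervalIntegral.integral_const_mul, hφ1eq t htIcc]
    have h3 : (∫ s in a..t, φ1 t * ((t - s) ^ (-α) * g1 s)) = ∫ s, Fk t s ∂ν := by
      simp only [hFk, hν]
      rw [MeasureTheory.setIntegral_indicator measurableSet_Ioc,
        intervalIntegral.integral_of_le ht.1.le, hA,
        Set.inter_eq_self_of_subset_right (Set.Ioc_subset_Ioc_right ht.2)]
    rw [h1, mul_left_comm]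
    congr 1
    rw [h2, h3]
  have hLHS : (∫ x in a..b, φ x * G x) = c * ∫ t, (∫ s, Fk t s ∂ν) ∂ν := by
    rw [intervalIntegral.integral_of_le hab.le, ← MeasureTheory.integral_const_mul]
    exact MeasureTheory.setIntegral_congr_fun measurableSet_Ioc hL
  -- measurability of the kernel
  have hkermeas : Measurable (Function.uncurry Fk) := by
    have hker1 : Measurable fun u : ℝ => u ^ (-α) :=
      measurable_of_continuousOn_compl_singleton 0 (fun x hx =>
        (Real.continuousAt_rpow_const x (-α) (Or.inl hx)).continuousWithinAt)
    have hker2 : Measurable fun p : ℝ × ℝ => (p.1 - p.2) ^ (-α) :=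
      hker1.comp (measurable_fst.sub measurable_snd)
    have hbase : Measurable fun p : ℝ × ℝ => φ1 p.1 * ((p.1 - p.2) ^ (-α) * g1 p.2) :=
      (hφ1cont.measurable.comp measurable_fst).mul
        (hker2.mul (hg1cont.measurable.comp measurable_snd))
    have huncurry : Function.uncurry Fk
        = Set.indicator {p : ℝ × ℝ | a < p.2 ∧ p.2 ≤ p.1}
          (fun p => φ1 p.1 * ((p.1 - p.2) ^ (-α) * g1 p.2)) := by
      funext p
      by_cases h : a < p.2 ∧ p.2 ≤ p.1
      · rw [Set.indicator_of_mem (show p ∈ {p : ℝ × ℝ | a < p.2 ∧ p.2 ≤ p.1} from h)]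
        simp only [Function.uncurry, hFk]
        rw [Set.indicator_of_mem (Set.mem_Ioc.mpr ⟨h.1, h.2⟩)]
      · rw [Set.indicator_of_notMem
            (show p ∉ {p : ℝ × ℝ | a < p.2 ∧ p.2 ≤ p.1} from h)]
        simp only [Function.uncurry, hFk]
        rw [Set.indicator_of_notMem (by simpa [Set.mem_Ioc] using h)]
    rw [huncurry]
    have hS : MeasurableSet {p : ℝ × ℝ | a < p.2 ∧ p.2 ≤ p.1} :=
      (measurableSet_lt measurable_const measurable_snd).inter
        (measurableSet_le measurable_snd measurable_fst)
    exact hbase.indicator hS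
  have hAESM : MeasureTheory.AEStronglyMeasurable (Function.uncurry Fk) (ν.prod ν) :=
    hkermeas.aestronglyMeasurable
  -- fiberwise integrability
  have hresteq : ∀ t ∈ A,
      ν.restrict (Set.Ioc a t) = MeasureTheory.volume.restrict (Set.Ioc a t) := by
    intro t ht
    rw [hν, MeasureTheory.Measure.restrict_restrict measurableSet_Ioc, hA,
      Set.inter_eq_self_of_subset_left (Set.Ioc_subset_Ioc_right ht.2)]
  have hFkint : ∀ t ∈ A, MeasureTheory.Integrable (Fk t) ν := by
    intro t ht
    simp only [hFk]
    apply MeasureTheory.IntegrableOn.integrable_indicator ?_ measurableSet_Ioc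
    have h1 : MeasureTheory.IntegrableOn (fun s => φ1 t * ((t - s) ^ (-α) * g1 s))
        (Set.Ioc a t) MeasureTheory.volume :=
      (((ker_intInt hα1 a t).mul_continuousOn hg1cont.continuousOn).const_mul (φ1 t)).1
    rw [MeasureTheory.IntegrableOn, hresteq t ht]
    exact h1
  -- bound on the fiberwise norms
  have hDint : ∀ t ∈ A, MeasureTheory.Integrable
      (fun s => Set.indicator (Set.Ioc a t) (fun s => Mφ * (Mg * (t - s) ^ (-α))) s) ν := by
    intro t ht
    apply MeasureTheory.IntegrableOn.integrable_indicator ?_ measurableSet_Ioc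
    have h1 : MeasureTheory.IntegrableOn (fun s => Mφ * (Mg * (t - s) ^ (-α)))
        (Set.Ioc a t) MeasureTheory.volume :=
      (((ker_intInt hα1 a t).const_mul Mg).const_mul Mφ).1
    rw [MeasureTheory.IntegrableOn, hresteq t ht]
    exact h1
  have hbound : ∀ t ∈ A, (∫ s, ‖Fk t s‖ ∂ν) ≤ Mφ * Mg * ((b - a) ^ (1 - α) / (1 - α)) := by
    intro t ht
    have hle : ∀ s, ‖Fk t s‖
        ≤ Set.indicator (Set.Ioc a t) (fun s => Mφ * (Mg * (t - s) ^ (-α))) s := by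
      intro s
      simp only [hFk]
      by_cases h : s ∈ Set.Ioc a t
      · rw [Set.indicator_of_mem h, Set.indicator_of_mem h]
        have hker : (0:ℝ) ≤ (t - s) ^ (-α) := Real.rpow_nonneg (sub_nonneg.2 h.2) _
        calc ‖φ1 t * ((t - s) ^ (-α) * g1 s)‖
            = ‖φ1 t‖ * ((t - s) ^ (-α) * ‖g1 s‖) := by
              rw [norm_mul, norm_mul, Real.norm_eq_abs ((t - s) ^ (-α)), abs_of_nonneg hker]
          _ ≤ Mφ * ((t - s) ^ (-α) * Mg) := by
              apply mul_le_mul (hMφ t) _ (by positivity) hMφ0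
              exact mul_le_mul_of_nonneg_left (hMg s) hker
          _ = Mφ * (Mg * (t - s) ^ (-α)) := by ring
      · rw [Set.indicator_of_notMem h, Set.indicator_of_notMem h, norm_zero]
    calc (∫ s, ‖Fk t s‖ ∂ν)
        ≤ ∫ s, Set.indicator (Set.Ioc a t) (fun s => Mφ * (Mg * (t - s) ^ (-α))) s ∂ν :=
          MeasureTheory.integral_mono_of_nonneg
            (Filter.Eventually.of_forall fun s => norm_nonneg _)
            (hDint t ht) (Filter.Eventually.of_forall hle)
      _ = ∫ s in Set.Ioc a t, Mφ * (Mg * (t - s) ^ (-α)) := by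
          rw [hν, MeasureTheory.setIntegral_indicator measurableSet_Ioc, hA,
            Set.inter_eq_self_of_subset_right (Set.Ioc_subset_Ioc_right ht.2)]
      _ = Mφ * (Mg * ∫ s in Set.Ioc a t, (t - s) ^ (-α)) := by
          rw [MeasureTheory.integral_const_mul, MeasureTheory.integral_const_mul]
      _ = Mφ * (Mg * ((t - a) ^ (1 - α) / (1 - α))) := by
          rw [← intervalIntegral.integral_of_le ht.1.le, ker_integral hα hα1 ht.1.le]
      _ ≤ Mφ * Mg * ((b - a) ^ (1 - α) / (1 - α)) := by
          rw [← mul_assoc]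
          gcongr <;> linarith [ht.1.le, ht.2]
  have hprodint : MeasureTheory.Integrable (Function.uncurry Fk) (ν.prod ν) := by
    rw [MeasureTheory.integrable_prod_iff hAESM]
    constructor
    · filter_upwards [MeasureTheory.ae_restrict_mem measurableSet_Ioc] with t ht
      exact hFkint t ht
    · apply MeasureTheory.Integrable.mono'
        (g := fun _ => Mφ * Mg * ((b - a) ^ (1 - α) / (1 - α)))
        (MeasureTheory.integrable_const _)
        hAESM.norm.integral_prod_right'
      filter_upwards [MeasureTheory.ae_restrict_mem measurableSet_Ioc] with t ht
      rw [Real.norm_eq_abs,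
        abs_of_nonneg (MeasureTheory.integral_nonneg fun s => norm_nonneg _)]
      exact hbound t ht
  have hswap : (∫ t, (∫ s, Fk t s ∂ν) ∂ν) = ∫ s, (∫ t, Fk t s ∂ν) ∂ν :=
    MeasureTheory.integral_integral_swap hprodint
  -- evaluate the inner integral after swapping
  have hR : ∀ s ∈ A, (∫ t, Fk t s ∂ν) = g s * ∫ τ in s..b, (τ - s) ^ (-α) * φ τ := by
    intro s hs
    have h1 : ∀ t, Fk t s
        = Set.indicator (Set.Ici s) (fun t => φ1 t * ((t - s) ^ (-α) * g1 s)) t := by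
      intro t
      simp only [hFk]
      by_cases h : s ≤ t
      · rw [Set.indicator_of_mem (Set.mem_Ici.mpr h),
          Set.indicator_of_mem (Set.mem_Ioc.mpr ⟨hs.1, h⟩)]
      · rw [Set.indicator_of_notMem (fun hmem => h (Set.mem_Ici.mp hmem)),
          Set.indicator_of_notMem (fun hmem => h (Set.mem_Ioc.mp hmem).2)]
    have hseteq : A ∩ Set.Ici s = Set.Icc s b := by
      ext x
      simp only [hA, Set.mem_inter_iff, Set.mem_Ioc, Set.mem_Ici, Set.mem_Icc]
      constructor
      · rintro ⟨⟨_, hxb⟩, hsx⟩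
        exact ⟨hsx, hxb⟩
      · rintro ⟨hsx, hxb⟩
        exact ⟨⟨lt_of_lt_of_le hs.1 hsx, hxb⟩, hsx⟩
    calc (∫ t, Fk t s ∂ν)
        = ∫ t, Set.indicator (Set.Ici s) (fun t => φ1 t * ((t - s) ^ (-α) * g1 s)) t ∂ν :=
          MeasureTheory.integral_congr_ae (Filter.Eventually.of_forall h1)
      _ = ∫ t in A ∩ Set.Ici s, φ1 t * ((t - s) ^ (-α) * g1 s) := by
          rw [hν, MeasureTheory.setIntegral_indicator measurableSet_Ici]
      _ = ∫ t in Set.Icc s b, φ1 t * ((t - s) ^ (-α) * g1 s) := by rw [hseteq]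
      _ = ∫ t in Set.Ioc s b, φ1 t * ((t - s) ^ (-α) * g1 s) :=
          MeasureTheory.integral_Icc_eq_integral_Ioc
      _ = ∫ τ in s..b, φ1 τ * ((τ - s) ^ (-α) * g1 s) :=
          (intervalIntegral.integral_of_le hs.2).symm
      _ = ∫ τ in s..b, g s * ((τ - s) ^ (-α) * φ τ) := by
          apply intervalIntegral.integral_congr
          intro τ hτ
          rw [Set.uIcc_of_le hs.2] at hτ
          simp only [hφ1eq τ ⟨le_trans hs.1.le hτ.1, hτ.2⟩, hg1eq s ⟨hs.1.le, hs.2⟩]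
          ring
      _ = g s * ∫ τ in s..b, (τ - s) ^ (-α) * φ τ := intervalIntegral.integral_const_mul _ _
  calc (∫ x in a..b, φ x * G x)
      = c * ∫ t, (∫ s, Fk t s ∂ν) ∂ν := hLHS
    _ = c * ∫ s, (∫ t, Fk t s ∂ν) ∂ν := by rw [hswap]
    _ = c * ∫ s in a..b, g s * ∫ τ in s..b, (τ - s) ^ (-α) * φ τ := by
        rw [intervalIntegral.integral_of_le hab.le]
        congr 1
        exact MeasureTheory.setIntegral_congr_fun measurableSet_Ioc hR
    _ = ∫ s in a..b, g s * (c * ∫ τ in s..b, (τ - s) ^ (-α) * φ τ) := by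
        rw [← intervalIntegral.integral_const_mul]
        apply intervalIntegral.integral_congr
        intro s _
        exact mul_left_comm c (g s) _
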